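/- Let G be a connected graph (possibly with loops) and let x be a nonzero configuration of G. Suppose a and b are vertices with N_G(a) ≠ N_G(b). Then there exists a configuration y with y(a) ≠ y(b) such that x can be transformed to y by a sequence of valid lit-only moves. -/

import Mathlib

structure LoopGraph (V : Type) [Fintype V] [DecidableEq V] where
  N : V → Finset V
  symm : ∀ u v, u ∈ N v ↔ v ∈ N u

namespace LoopGraph

variable {V : Type} [Fintype V] [DecidableEq V]

/-- Indicator vector of a finite set of vertices, as a configuration over `F_2`. -/
def chi (S : Finset V) : V → ZMod 2 := fun u => if u ∈ S then 1 else 0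

/-- One regular move of the sigma-game. -/
def RegStep (G : LoopGraph V) (x y : V → ZMod 2) : Prop :=
  ∃ v, y = x + chi (G.N v)

/-- One valid move of the lit-only sigma-game. -/
def ValidStep (G : LoopGraph V) (x y : V → ZMod 2) : Prop :=
  ∃ v, x v = 1 ∧ y = x + chi (G.N v)

def RegReach (G : LoopGraph V) : (V → ZMod 2) → (V → ZMod 2) → Prop :=
  Relation.ReflTransGen G.RegStep

def ValidReach (G : LoopGraph V) : (V → ZMod 2) → (V → ZMod 2) → Prop :=
  Relation.ReflTransGen G.ValidStep

/-- The light number of a configuration. -/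
def L (x : V → ZMod 2) : ℕ := (Finset.univ.filter fun v => x v = 1).card

/-- Minimum light number of a configuration for the sigma-game. -/
noncomputable def ML (G : LoopGraph V) (x : V → ZMod 2) : ℕ :=
  sInf (L '' {y | G.RegReach x y})

/-- Minimum light number of a configuration for the lit-only sigma-game. -/
noncomputable def MLs (G : LoopGraph V) (x : V → ZMod 2) : ℕ :=
  sInf (L '' {y | G.ValidReach x y})

/-- Minimum light number of the sigma-game on `G`. -/
noncomputable def MLmax (G : LoopGraph V) : ℕ := ⨆ x, G.ML x

/-- Minimum light number of the lit-only sigma-game on `G`. -/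
noncomputable def MLsmax (G : LoopGraph V) : ℕ := ⨆ x, G.MLs x

/-- Non-loop adjacency. -/
def Adj (G : LoopGraph V) (u w : V) : Prop := u ≠ w ∧ w ∈ G.N u

def Connected (G : LoopGraph V) : Prop :=
  ∀ u w : V, Relation.ReflTransGen G.Adj u w

/-- Degree, counting non-loop edges only. -/
def deg (G : LoopGraph V) (v : V) : ℕ := ((G.N v).erase v).card

/-- Underlying simple graph (loops discarded). -/
def simple (G : LoopGraph V) : SimpleGraph V where
  Adj := G.Adj
  symm := by
    constructor
    intro u w h
    exact ⟨h.1.symm, (G.symm w u).mp h.2⟩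
  loopless := by constructor; intro u h; exact h.1 rfl

/-- Induced subgraph on a finite vertex subset. -/
def induce (G : LoopGraph V) (T : Finset V) : LoopGraph {u // u ∈ T} where
  N u := Finset.univ.filter fun w => w.val ∈ G.N u.val
  symm := by
    intro u w
    simp only [Finset.mem_filter, Finset.mem_univ, true_and]
    exact G.symm u.1 w.1

end LoopGraph

private lemma zmod2_cases (z : ZMod 2) : z = 0 ∨ z = 1 := by revert z; decide

private lemma propagate {V : Type} [Fintype V] [DecidableEq V] (G : LoopGraph V)
    {v c : V} (hpath : Relation.ReflTransGen G.Adj v c) :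
    ∀ x : V → ZMod 2, x v = 1 → ∃ y, G.ValidReach x y ∧ y c = 1 := by
  induction hpath using Relation.ReflTransGen.head_induction_on with
  | refl => exact fun x hx => ⟨x, Relation.ReflTransGen.refl, hx⟩
  | head hadj _ ih =>
    rename_i v w _
    intro x hx
    rcases zmod2_cases (x w) with h0 | h1
    · obtain ⟨y, hy, hyc⟩ := ih (x + LoopGraph.chi (G.N v)) (by
        simp [LoopGraph.chi, hadj.2, h0])
      exact ⟨y, Relation.ReflTransGen.head ⟨v, hx, rfl⟩ hy, hyc⟩
    · exact ih x h1

open LoopGraph in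
theorem exists_reachable_with_different_states
    {V : Type} [Fintype V] [DecidableEq V] (G : LoopGraph V)
    (hconn : G.Connected)
    (x : V → ZMod 2) (hx : x ≠ 0)
    (a b : V) (hab : G.N a ≠ G.N b) :
    ∃ y : V → ZMod 2, y a ≠ y b ∧ G.ValidReach x y := by
  obtain ⟨c, hc⟩ : ∃ c, ¬(c ∈ G.N a ↔ c ∈ G.N b) := by
    by_contra h
    push_neg at h
    exact hab (Finset.ext fun c => h c)
  obtain ⟨v, hv⟩ : ∃ v, x v ≠ 0 := by
    by_contra h
    push_neg at h
    exact hx (funext h)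
  have hv1 : x v = 1 := (zmod2_cases (x v)).resolve_left hv
  obtain ⟨y, hy, hyc⟩ := propagate G (hconn v c) x hv1
  rcases eq_or_ne (y a) (y b) with heq | hne
  · refine ⟨y + chi (G.N c), ?_, Relation.ReflTransGen.tail hy ⟨c, hyc, rfl⟩⟩
    have ha : a ∈ G.N c ↔ c ∈ G.N a := G.symm a c
    have hb : b ∈ G.N c ↔ c ∈ G.N b := G.symm b c
    rcases Classical.em (c ∈ G.N a) with h1 | h1 <;>
      rcases Classical.em (c ∈ G.N b) with h2 | h2
    · exact absurd (iff_of_true h1 h2) hc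
    · simp only [Pi.add_apply, chi, ha.mpr h1, if_pos, if_neg (fun h => h2 (hb.mp h)), heq]
      intro h
      have := add_left_cancel h
      simp at this
    · simp only [Pi.add_apply, chi, hb.mpr h2, if_pos, if_neg (fun h => h1 (ha.mp h)), heq]
      intro h
      have := add_left_cancel h
      simp at this
    · exact absurd (iff_of_false h1 h2) hc
  · exact ⟨y, hne, hy⟩
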